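/- For the Hénon–Heiles system, the two Hamiltonians H₁ = ½y₁² + ½y₂² + x₁³ + ½x₁x₂² and H₂ = ½x₂y₁y₂ − ½x₁y₂² + (1/16)x₂⁴ + ¼x₁²x₂² Poisson-commute with respect to the canonical Poisson bracket on ℝ⁴ with coordinates (x₁,x₂,y₁,y₂). -/

import Mathlib

open scoped BigOperators

noncomputable def Xc (i : Fin 2) : ((Fin 2 → ℝ) × (Fin 2 → ℝ)) →L[ℝ] ℝ :=
  (ContinuousLinearMap.proj i).comp (ContinuousLinearMap.fst ℝ (Fin 2 → ℝ) (Fin 2 → ℝ))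
noncomputable def Yc (i : Fin 2) : ((Fin 2 → ℝ) × (Fin 2 → ℝ)) →L[ℝ] ℝ :=
  (ContinuousLinearMap.proj i).comp (ContinuousLinearMap.snd ℝ (Fin 2 → ℝ) (Fin 2 → ℝ))

lemma fderiv_H1 (ξ v : (Fin 2 → ℝ) × (Fin 2 → ℝ)) :
    fderiv ℝ (fun p : (Fin 2 → ℝ) × (Fin 2 → ℝ) => (1/2) * (p.2 0)^2 + (1/2) * (p.2 1)^2
          + (p.1 0)^3 + (1/2) * (p.1 0) * (p.1 1)^2) ξ v =
      (ξ.2 0)*(v.2 0) + (ξ.2 1)*(v.2 1) + 3*(ξ.1 0)^2*(v.1 0)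
        + (1/2)*((v.1 0)*(ξ.1 1)^2 + (ξ.1 0)*(2*(ξ.1 1)*(v.1 1))) := by
  have hx0 : HasFDerivAt (fun p : (Fin 2 → ℝ) × (Fin 2 → ℝ) => p.1 0) (Xc 0) ξ := (Xc 0).hasFDerivAt
  have hx1 : HasFDerivAt (fun p : (Fin 2 → ℝ) × (Fin 2 → ℝ) => p.1 1) (Xc 1) ξ := (Xc 1).hasFDerivAt
  have hy0 : HasFDerivAt (fun p : (Fin 2 → ℝ) × (Fin 2 → ℝ) => p.2 0) (Yc 0) ξ := (Yc 0).hasFDerivAt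
  have hy1 : HasFDerivAt (fun p : (Fin 2 → ℝ) × (Fin 2 → ℝ) => p.2 1) (Yc 1) ξ := (Yc 1).hasFDerivAt
  have hfun : (fun p : (Fin 2 → ℝ) × (Fin 2 → ℝ) => (1/2) * (p.2 0)^2 + (1/2) * (p.2 1)^2
          + (p.1 0)^3 + (1/2) * (p.1 0) * (p.1 1)^2)
      = fun p => (1/2) * (p.2 0 * p.2 0) + (1/2) * (p.2 1 * p.2 1)
          + p.1 0 * (p.1 0 * p.1 0) + (1/2) * p.1 0 * (p.1 1 * p.1 1) := by
    funext p; ring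
  rw [hfun]
  have h := ((((hy0.mul hy0).const_mul (1/2:ℝ)).add ((hy1.mul hy1).const_mul (1/2:ℝ))).add
      (hx0.mul (hx0.mul hx0))).add ((hx0.const_mul (1/2:ℝ)).mul (hx1.mul hx1))
  erw [h.fderiv]
  simp [Xc, Yc]
  ring

lemma fderiv_H2 (ξ v : (Fin 2 → ℝ) × (Fin 2 → ℝ)) :
    fderiv ℝ (fun p : (Fin 2 → ℝ) × (Fin 2 → ℝ) => (1/2) * (p.1 1) * (p.2 0) * (p.2 1)
          - (1/2) * (p.1 0) * (p.2 1)^2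
          + (1/16) * (p.1 1)^4 + (1/4) * (p.1 0)^2 * (p.1 1)^2) ξ v =
      (1/2)*((v.1 1)*(ξ.2 0)*(ξ.2 1) + (ξ.1 1)*(v.2 0)*(ξ.2 1) + (ξ.1 1)*(ξ.2 0)*(v.2 1))
        - (1/2)*((v.1 0)*(ξ.2 1)^2 + (ξ.1 0)*(2*(ξ.2 1)*(v.2 1)))
        + (1/4)*(ξ.1 1)^3*(v.1 1)
        + (1/4)*(2*(ξ.1 0)*(v.1 0)*(ξ.1 1)^2 + (ξ.1 0)^2*(2*(ξ.1 1)*(v.1 1))) := by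
  have hx0 : HasFDerivAt (fun p : (Fin 2 → ℝ) × (Fin 2 → ℝ) => p.1 0) (Xc 0) ξ := (Xc 0).hasFDerivAt
  have hx1 : HasFDerivAt (fun p : (Fin 2 → ℝ) × (Fin 2 → ℝ) => p.1 1) (Xc 1) ξ := (Xc 1).hasFDerivAt
  have hy0 : HasFDerivAt (fun p : (Fin 2 → ℝ) × (Fin 2 → ℝ) => p.2 0) (Yc 0) ξ := (Yc 0).hasFDerivAt
  have hy1 : HasFDerivAt (fun p : (Fin 2 → ℝ) × (Fin 2 → ℝ) => p.2 1) (Yc 1) ξ := (Yc 1).hasFDerivAt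
  have hfun : (fun p : (Fin 2 → ℝ) × (Fin 2 → ℝ) => (1/2) * (p.1 1) * (p.2 0) * (p.2 1)
          - (1/2) * (p.1 0) * (p.2 1)^2
          + (1/16) * (p.1 1)^4 + (1/4) * (p.1 0)^2 * (p.1 1)^2)
      = fun p => ((1/2) * p.1 1 * (p.2 0 * p.2 1)
          - (1/2) * p.1 0 * (p.2 1 * p.2 1))
          + ((1/16) * (p.1 1 * (p.1 1 * (p.1 1 * p.1 1)))
          + (1/4) * (p.1 0 * p.1 0) * (p.1 1 * p.1 1)) := by
    funext p; ring
  rw [hfun]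
  have h := ((((hx1.const_mul (1/2:ℝ)).mul (hy0.mul hy1)).sub
      ((hx0.const_mul (1/2:ℝ)).mul (hy1.mul hy1))).add
      (((hx1.mul (hx1.mul (hx1.mul hx1))).const_mul (1/16:ℝ)).add
      (((hx0.mul hx0).const_mul (1/4:ℝ)).mul (hx1.mul hx1))))
  erw [h.fderiv]
  simp [Xc, Yc]
  ring

/-- The canonical Poisson bracket on `ℝ⁴` with coordinates
`(x₁,x₂,y₁,y₂)`: `{F,G} = ∑ i (∂F/∂x_i ∂G/∂y_i − ∂F/∂y_i ∂G/∂x_i)`. -/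
noncomputable def poissonBracket2 (F G : (Fin 2 → ℝ) × (Fin 2 → ℝ) → ℝ)
    (ξ : (Fin 2 → ℝ) × (Fin 2 → ℝ)) : ℝ :=
  ∑ i : Fin 2,
    (fderiv ℝ F ξ (Pi.single i 1, 0) * fderiv ℝ G ξ (0, Pi.single i 1)
      - fderiv ℝ F ξ (0, Pi.single i 1) * fderiv ℝ G ξ (Pi.single i 1, 0))

/-- the Hénon–Heiles Hamiltonians
`H₁ = ½y₁² + ½y₂² + x₁³ + ½x₁x₂²` and
`H₂ = ½x₂y₁y₂ − ½x₁y₂² + (1/16)x₂⁴ + ¼x₁²x₂²`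
Poisson-commute with respect to the canonical Poisson bracket on ℝ⁴. -/
theorem henon_heiles_hamiltonians_commute :
    ∀ ξ : (Fin 2 → ℝ) × (Fin 2 → ℝ),
      poissonBracket2
        (fun p => (1/2) * (p.2 0)^2 + (1/2) * (p.2 1)^2
          + (p.1 0)^3 + (1/2) * (p.1 0) * (p.1 1)^2)
        (fun p => (1/2) * (p.1 1) * (p.2 0) * (p.2 1)
          - (1/2) * (p.1 0) * (p.2 1)^2
          + (1/16) * (p.1 1)^4 + (1/4) * (p.1 0)^2 * (p.1 1)^2) ξ = 0 := by
  intro ξ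
  simp only [poissonBracket2, Fin.sum_univ_two, fderiv_H1, fderiv_H2]
  simp [Pi.single_apply]
  ring
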